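/- If 𝓡 is a countably infinite collection of pairwise disjoint, pairwise equivalent rays in a graph G, then there exists a ray S in G that meets every ray of 𝓡 infinitely often (i.e., S shares infinitely many vertices with each member of 𝓡). -/
import Mathlib


/-- `f` is a ray (one-way infinite path) in `G`. -/
def IsRay {V : Type*} (G : SimpleGraph V) (f : ℕ → V) : Prop :=
  Function.Injective f ∧ ∀ n, G.Adj (f n) (f (n + 1))

/-- Two rays are equivalent: there are infinitely many pairwise vertex-disjoint
paths in `G`, each with one endpoint on `f` and the other on `g`. -/
def RayEquiv {V : Type*} (G : SimpleGraph V) (f g : ℕ → V) : Prop :=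
  ∃ (u v : ℕ → V) (p : ∀ i : ℕ, G.Walk (u i) (v i)),
    (∀ i, (p i).IsPath) ∧ (∀ i, u i ∈ Set.range f) ∧ (∀ i, v i ∈ Set.range g) ∧
    ∀ i j, i ≠ j → ∀ x, x ∈ (p i).support → x ∉ (p j).support

namespace TransversalAux

open SimpleGraph

variable {V : Type*} {G : SimpleGraph V}

/-- Walk along a ray from index `a` to `a + d`. -/
def rayWalk (f : ℕ → V) (hf : ∀ n, G.Adj (f n) (f (n + 1))) (a : ℕ) :
    (d : ℕ) → G.Walk (f a) (f (a + d))
  | 0 => Walk.nil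
  | d + 1 => (rayWalk f hf a d).concat (hf (a + d))

lemma rayWalk_support (f : ℕ → V) (hf : ∀ n, G.Adj (f n) (f (n + 1))) (a d : ℕ) {x : V} :
    x ∈ (rayWalk f hf a d).support ↔ ∃ t, a ≤ t ∧ t ≤ a + d ∧ x = f t := by
  induction d with
  | zero =>
      simp only [rayWalk, Walk.support_nil, List.mem_singleton]
      constructor
      · rintro rfl; exact ⟨a, le_rfl, by omega, rfl⟩
      · rintro ⟨t, h1, h2, rfl⟩; congr 1; omega
  | succ d ih =>
      simp only [rayWalk, Walk.support_concat, List.concat_eq_append, List.mem_append,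
        List.mem_singleton, ih]
      constructor
      · rintro (⟨t, h1, h2, rfl⟩ | rfl)
        · exact ⟨t, h1, by omega, rfl⟩
        · exact ⟨a + d + 1, by omega, by omega, rfl⟩
      · rintro ⟨t, h1, h2, rfl⟩
        rcases Nat.lt_or_ge t (a + d + 1) with h | h
        · exact Or.inl ⟨t, h1, by omega, rfl⟩
        · right; congr 1; omega

lemma getVert_inj {u v : V} {w : G.Walk u v} (hw : w.IsPath) :
    ∀ {m n : ℕ}, m ≤ w.length → n ≤ w.length → w.getVert m = w.getVert n → m = n := by
  induction w with
  | nil => intro m n hm hn _; simp only [Walk.length_nil, Nat.le_zero] at hm hn; omega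
  | @cons u x v h q ih =>
      rintro m n hm hn heq
      rw [Walk.cons_isPath_iff] at hw
      match m, n with
      | 0, 0 => rfl
      | 0, n + 1 =>
          exfalso; apply hw.2
          rw [show (Walk.cons h q).getVert 0 = u from rfl] at heq
          rw [Walk.getVert_cons_succ] at heq
          exact heq ▸ SimpleGraph.Walk.mem_support_iff_exists_getVert.mpr
            ⟨n, rfl, by simpa using hn⟩
      | m + 1, 0 =>
          exfalso; apply hw.2
          rw [show (Walk.cons h q).getVert 0 = u from rfl] at heq
          rw [Walk.getVert_cons_succ] at heq
          exact heq ▸ SimpleGraph.Walk.mem_support_iff_exists_getVert.mpr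
            ⟨m, rfl, by simpa using hm⟩
      | m + 1, n + 1 =>
          simp only [Walk.getVert_cons_succ] at heq
          have := ih hw.1 (by simpa using hm) (by simpa using hn) heq
          omega

/-- The schedule: visits ray 0 at even times and every other ray infinitely often. -/
def sdl (m : ℕ) : ℕ := if Even m then 0 else (Nat.unpair (m / 2)).1 + 1

lemma sdl_ne (m : ℕ) : sdl m ≠ sdl (m + 1) := by
  rcases Nat.even_or_odd m with h | h
  · simp [sdl, h, Nat.even_add_one, Nat.not_even_iff_odd.mpr (Even.add_one h)]
  · simp [sdl, Nat.not_even_iff_odd.mpr h, Nat.even_add_one,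
      Nat.not_odd_iff_even.mp (by simpa using h.add_one)]

lemma sdl_infinite (i : ℕ) : {m : ℕ | sdl (m + 1) = i}.Infinite := by
  cases i with
  | zero =>
      apply Set.infinite_of_injective_forall_mem (f := fun k : ℕ => 2 * k + 1)
        (fun a b hab => by simpa using hab)
      intro k
      simp only [Set.mem_setOf_eq, sdl]
      rw [if_pos (by simp [Nat.even_add_one, parity_simps])]
  | succ i =>
      apply Set.infinite_of_injective_forall_mem (f := fun l : ℕ => 2 * Nat.pair i l)
        (fun a b hab => (Nat.pair_eq_pair.mp (by simpa using hab : Nat.pair i a = Nat.pair i b)).2)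
      intro l
      have h1 : ¬ Even (2 * Nat.pair i l + 1) := by simp [Nat.even_add_one, parity_simps]
      simp only [Set.mem_setOf_eq, sdl, if_neg h1]
      have : (2 * Nat.pair i l + 1) / 2 = Nat.pair i l := by omega
      rw [this, Nat.unpair_pair]


lemma step (𝓡 : ℕ → ℕ → V) (hray : ∀ i, IsRay G (𝓡 i))
    (hdisj : ∀ i j, i ≠ j → Disjoint (Set.range (𝓡 i)) (Set.range (𝓡 j)))
    (hequiv : ∀ i j, RayEquiv G (𝓡 i) (𝓡 j))
    (i j : ℕ) (hij : i ≠ j) (U : Set V) (hU : U.Finite) (a : ℕ)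
    (hinv : ∀ t, 𝓡 i t ∈ U → t ≤ a) :
    ∃ (b : ℕ) (w : G.Walk (𝓡 i a) (𝓡 j b)), w.IsPath ∧
      (∀ x ∈ w.support, x ≠ 𝓡 i a → x ∉ U) ∧
      (∀ t, (𝓡 j t ∈ U ∨ 𝓡 j t ∈ w.support) → t ≤ b) := by
  classical
  obtain ⟨u, v, p, hp, hu, hv, hpd⟩ := hequiv i j
  have hA : (𝓡 j ⁻¹' U).Finite := Set.Finite.preimage (hray j).1.injOn hU
  obtain ⟨c, hc⟩ := hA.bddAbove
  set F : Set V := U ∪ (𝓡 i '' Set.Iic a) ∪ (𝓡 j '' Set.Iic c) with hFdef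
  have hFfin : F.Finite :=
    ((hU.union ((Set.finite_Iic a).image _)).union ((Set.finite_Iic c).image _))
  have hbad : {k | ∃ x ∈ F, x ∈ (p k).support}.Finite := by
    have hsub : {k | ∃ x ∈ F, x ∈ (p k).support} ⊆ ⋃ x ∈ F, {k | x ∈ (p k).support} := by
      rintro k ⟨x, hx1, hx2⟩; exact Set.mem_biUnion hx1 hx2
    refine Set.Finite.subset (hFfin.biUnion fun x _ => ?_) hsub
    apply Set.Subsingleton.finite
    intro k1 h1 k2 h2
    by_contra hne
    exact hpd k1 k2 hne x h1 h2
  obtain ⟨k, hk⟩ := hbad.infinite_compl.nonempty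
  have hkF : ∀ x ∈ (p k).support, x ∉ F := fun x hx hxF => hk ⟨x, hxF, hx⟩
  obtain ⟨n, hn⟩ := hu k
  have hna : a < n := by
    by_contra h
    exact hkF (u k) ((p k).start_mem_support)
      (Or.inl (Or.inr ⟨n, Set.mem_Iic.mpr (by omega), hn⟩))
  obtain ⟨d, rfl⟩ : ∃ d, n = a + (d + 1) := ⟨n - a - 1, by omega⟩
  set seg : G.Walk (𝓡 i a) (𝓡 i (a + (d + 1))) := rayWalk (𝓡 i) (hray i).2 a (d + 1) with hseg
  set Q : G.Walk (𝓡 i a) (v k) := seg.append ((p k).copy hn.symm rfl) with hQ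
  have hQsup : ∀ x ∈ Q.support, x ∈ seg.support ∨ x ∈ (p k).support := by
    intro x hx
    rw [hQ, Walk.mem_support_append_iff] at hx
    rcases hx with h | h
    · exact Or.inl h
    · right; simpa using h
  have hBfin : (𝓡 j ⁻¹' {x | x ∈ Q.support}).Finite :=
    Set.Finite.preimage (hray j).1.injOn (Q.support.finite_toSet)
  obtain ⟨b0, hb0⟩ := hBfin.bddAbove
  obtain ⟨m0, hm0⟩ := hv k
  have hm0Q : 𝓡 j m0 ∈ Q.support := by rw [hm0]; exact Q.end_mem_support
  set b := Nat.findGreatest (fun t => 𝓡 j t ∈ Q.support) b0 with hbdef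
  have hb1 : 𝓡 j b ∈ Q.support :=
    Nat.findGreatest_spec (P := fun t => 𝓡 j t ∈ Q.support) (hb0 hm0Q) hm0Q
  have hb2 : ∀ t, 𝓡 j t ∈ Q.support → t ≤ b := fun t ht => Nat.le_findGreatest (P := fun t => 𝓡 j t ∈ Q.support) (hb0 ht) ht
  set W : G.Walk (𝓡 i a) (𝓡 j b) := (Q.takeUntil _ hb1).bypass with hW
  have hWsub : ∀ x ∈ W.support, x ∈ Q.support := fun x hx =>
    Walk.support_takeUntil_subset _ hb1 (Walk.support_bypass_subset _ hx)
  refine ⟨b, W, Walk.bypass_isPath _, ?_, ?_⟩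
  · intro x hx hxa hxU
    rcases hQsup x (hWsub x hx) with h | h
    · obtain ⟨t, ht1, ht2, rfl⟩ := (rayWalk_support _ _ _ _).mp h
      have hta := hinv t hxU
      have : t = a := by omega
      exact hxa (by rw [this])
    · exact hkF x h (Or.inl (Or.inl hxU))
  · have hcb : c < b := by
      rcases hQsup _ hb1 with h | h
      · exfalso
        obtain ⟨t, _, _, hteq⟩ := (rayWalk_support _ _ _ _).mp h
        exact Set.disjoint_left.mp (hdisj i j hij) ⟨t, hteq.symm⟩ ⟨b, rfl⟩
      · by_contra h'
        push_neg at h'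
        exact hkF _ h (Or.inr ⟨b, h', rfl⟩)
    intro t ht
    rcases ht with h | h
    · exact le_trans (hc h) hcb.le
    · exact hb2 t (hWsub _ h)


section Chain

variable {V : Type*} {G : SimpleGraph V} {𝓡 : ℕ → ℕ → V}
variable (H1 : ∀ i, IsRay G (𝓡 i))
variable (H2 : ∀ i j, i ≠ j → Disjoint (Set.range (𝓡 i)) (Set.range (𝓡 j)))
variable (H3 : ∀ i j, RayEquiv G (𝓡 i) (𝓡 j))

/-- The state after `m` steps: position index on ray `sdl m` and used vertex set. -/
def St (𝓡 : ℕ → ℕ → V) (m : ℕ) : Type _ :=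
  Σ' (a : ℕ) (U : Set V), U.Finite ∧ ∀ t, 𝓡 (sdl m) t ∈ U → t ≤ a

noncomputable def chain (m : ℕ) : St 𝓡 m :=
  Nat.rec (motive := fun m => St 𝓡 m)
    ⟨0, ∅, Set.finite_empty, fun t ht => absurd ht (Set.notMem_empty _)⟩
    (fun m ih =>
      ⟨(step 𝓡 H1 H2 H3 (sdl m) (sdl (m + 1)) (sdl_ne m) ih.2.1 ih.2.2.1 ih.1
          ih.2.2.2).choose,
        ih.2.1 ∪ {x | x ∈ (step 𝓡 H1 H2 H3 (sdl m) (sdl (m + 1)) (sdl_ne m) ih.2.1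
          ih.2.2.1 ih.1 ih.2.2.2).choose_spec.choose.support},
        ⟨ih.2.2.1.union (List.finite_toSet _),
          fun t ht => (step 𝓡 H1 H2 H3 (sdl m) (sdl (m + 1)) (sdl_ne m) ih.2.1
            ih.2.2.1 ih.1 ih.2.2.2).choose_spec.choose_spec.2.2 t
            ((Set.mem_union _ _ _).mp ht)⟩⟩) m

noncomputable def ac (m : ℕ) : ℕ := (chain H1 H2 H3 m).1
noncomputable def Uc (m : ℕ) : Set V := (chain H1 H2 H3 m).2.1
noncomputable def xv (m : ℕ) : V := 𝓡 (sdl m) (ac H1 H2 H3 m)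

theorem chainEx (m : ℕ) :
    ∃ (b : ℕ) (w : G.Walk (𝓡 (sdl m) (ac H1 H2 H3 m)) (𝓡 (sdl (m + 1)) b)), w.IsPath ∧
      (∀ x ∈ w.support, x ≠ 𝓡 (sdl m) (ac H1 H2 H3 m) → x ∉ Uc H1 H2 H3 m) ∧
      (∀ t, (𝓡 (sdl (m + 1)) t ∈ Uc H1 H2 H3 m ∨ 𝓡 (sdl (m + 1)) t ∈ w.support) → t ≤ b) :=
  step 𝓡 H1 H2 H3 (sdl m) (sdl (m + 1)) (sdl_ne m) (chain H1 H2 H3 m).2.1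
    (chain H1 H2 H3 m).2.2.1 (chain H1 H2 H3 m).1 (chain H1 H2 H3 m).2.2.2

noncomputable def WK (m : ℕ) : G.Walk (xv H1 H2 H3 m) (xv H1 H2 H3 (m + 1)) :=
  (chainEx H1 H2 H3 m).choose_spec.choose

lemma Uc_succ (m : ℕ) :
    Uc H1 H2 H3 (m + 1) = Uc H1 H2 H3 m ∪ {x | x ∈ (WK H1 H2 H3 m).support} := rfl

lemma WK_spec (m : ℕ) : (WK H1 H2 H3 m).IsPath ∧
    (∀ x ∈ (WK H1 H2 H3 m).support, x ≠ xv H1 H2 H3 m → x ∉ Uc H1 H2 H3 m) ∧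
    (∀ t, (𝓡 (sdl (m + 1)) t ∈ Uc H1 H2 H3 m ∨ 𝓡 (sdl (m + 1)) t ∈ (WK H1 H2 H3 m).support) →
      t ≤ ac H1 H2 H3 (m + 1)) :=
  (chainEx H1 H2 H3 m).choose_spec.choose_spec

lemma xv_ne (m : ℕ) : xv H1 H2 H3 m ≠ xv H1 H2 H3 (m + 1) := fun h =>
  Set.disjoint_left.mp (H2 _ _ (sdl_ne m)) ⟨_, rfl⟩ ⟨_, h.symm⟩

lemma WK_len (m : ℕ) : 0 < (WK H1 H2 H3 m).length := by
  rcases Nat.eq_zero_or_pos (WK H1 H2 H3 m).length with h | h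
  · exact absurd (Walk.eq_of_length_eq_zero h) (xv_ne H1 H2 H3 m)
  · exact h

lemma Uc_mono {m m' : ℕ} (h : m ≤ m') : Uc H1 H2 H3 m ⊆ Uc H1 H2 H3 m' := by
  induction m' with
  | zero => simpa [Nat.le_zero.mp h] using Set.Subset.rfl
  | succ m' ih =>
      rcases Nat.lt_or_ge m (m' + 1) with h' | h'
      · exact (ih (by omega)).trans (by rw [Uc_succ]; exact Set.subset_union_left)
      · have : m = m' + 1 := by omega
        subst this; exact Set.Subset.rfl

lemma WK_sub {t m : ℕ} (h : t < m) : ∀ x ∈ (WK H1 H2 H3 t).support, x ∈ Uc H1 H2 H3 m :=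
  fun x hx => Uc_mono H1 H2 H3 (by omega : t + 1 ≤ m)
    (by rw [Uc_succ]; exact Or.inr hx)

noncomputable def off (m : ℕ) : ℕ :=
  Nat.rec 0 (fun m ih => ih + (WK H1 H2 H3 m).length) m

lemma off_succ (m : ℕ) : off H1 H2 H3 (m + 1) = off H1 H2 H3 m + (WK H1 H2 H3 m).length := rfl

lemma off_lt (m : ℕ) : off H1 H2 H3 m < off H1 H2 H3 (m + 1) := by
  rw [off_succ]; have := WK_len H1 H2 H3 m; omega

lemma off_mono : StrictMono (off H1 H2 H3) := strictMono_nat_of_lt_succ (off_lt H1 H2 H3)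

lemma off_ge (m : ℕ) : m ≤ off H1 H2 H3 m := by
  induction m with
  | zero => exact Nat.zero_le _
  | succ m ih => have := WK_len H1 H2 H3 m; rw [off_succ]; omega

noncomputable def blk (n : ℕ) : ℕ := Nat.findGreatest (fun m => off H1 H2 H3 m ≤ n) n

lemma blk_le (n : ℕ) : off H1 H2 H3 (blk H1 H2 H3 n) ≤ n := by
  have h0 : off H1 H2 H3 0 ≤ n := by
    rw [show off H1 H2 H3 0 = 0 from rfl]; exact Nat.zero_le n
  exact Nat.findGreatest_spec (P := fun m => off H1 H2 H3 m ≤ n) (Nat.zero_le n) h0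

lemma blk_lt (n : ℕ) : n < off H1 H2 H3 (blk H1 H2 H3 n + 1) := by
  by_contra h
  push_neg at h
  have h2 : blk H1 H2 H3 n + 1 ≤ n := le_trans (off_ge H1 H2 H3 _) h
  have hle : blk H1 H2 H3 n + 1 ≤ blk H1 H2 H3 n :=
    Nat.le_findGreatest (P := fun m => off H1 H2 H3 m ≤ n) h2 h
  omega

lemma blk_eq {m n : ℕ} (h1 : off H1 H2 H3 m ≤ n) (h2 : n < off H1 H2 H3 (m + 1)) :
    blk H1 H2 H3 n = m := by
  refine le_antisymm ?_ (Nat.le_findGreatest (le_trans (off_ge H1 H2 H3 m) h1) h1)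
  by_contra h
  push_neg at h
  have := (off_mono H1 H2 H3).monotone (show m + 1 ≤ blk H1 H2 H3 n by omega)
  have := blk_le H1 H2 H3 n
  omega

noncomputable def Sray (n : ℕ) : V :=
  (WK H1 H2 H3 (blk H1 H2 H3 n)).getVert (n - off H1 H2 H3 (blk H1 H2 H3 n))

lemma Sray_spec {m r : ℕ} (h : r < (WK H1 H2 H3 m).length) :
    Sray H1 H2 H3 (off H1 H2 H3 m + r) = (WK H1 H2 H3 m).getVert r := by
  have hb : blk H1 H2 H3 (off H1 H2 H3 m + r) = m :=
    blk_eq H1 H2 H3 (by omega) (by rw [off_succ]; omega)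
  rw [Sray, hb]
  congr 1
  omega

lemma Sray_off (m : ℕ) : Sray H1 H2 H3 (off H1 H2 H3 m) = xv H1 H2 H3 m := by
  have := Sray_spec H1 H2 H3 (m := m) (r := 0) (WK_len H1 H2 H3 m)
  simpa using this

end Chain


theorem exists_transversal_ray' {V : Type*} (G : SimpleGraph V) (𝓡 : ℕ → ℕ → V)
    (H1 : ∀ i, IsRay G (𝓡 i))
    (H2 : ∀ i j, i ≠ j → Disjoint (Set.range (𝓡 i)) (Set.range (𝓡 j)))
    (H3 : ∀ i j, RayEquiv G (𝓡 i) (𝓡 j)) :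
    ∃ S : ℕ → V, IsRay G S ∧ ∀ i, {n : ℕ | S n ∈ Set.range (𝓡 i)}.Infinite := by
  classical
  refine ⟨Sray H1 H2 H3, ⟨?_, ?_⟩, ?_⟩
  · -- injectivity
    have getmem : ∀ (m r : ℕ), r ≤ (WK H1 H2 H3 m).length →
        (WK H1 H2 H3 m).getVert r ∈ (WK H1 H2 H3 m).support :=
      fun m r hr => Walk.mem_support_iff_exists_getVert.mpr ⟨r, rfl, hr⟩
    have clash : ∀ m m' r r', m < m' → r < (WK H1 H2 H3 m).length →
        r' < (WK H1 H2 H3 m').length →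
        (WK H1 H2 H3 m).getVert r ≠ (WK H1 H2 H3 m').getVert r' := by
      intro m m' r r' hmm hr hr' heq
      have hvU : (WK H1 H2 H3 m).getVert r ∈ Uc H1 H2 H3 m' :=
        WK_sub H1 H2 H3 hmm _ (getmem m r hr.le)
      rcases Nat.eq_zero_or_pos r' with h0 | h0
      · subst h0
        obtain ⟨m'', rfl⟩ : ∃ m'', m' = m'' + 1 := ⟨m' - 1, by omega⟩
        rw [Walk.getVert_zero] at heq
        rcases Nat.lt_or_ge m m'' with hc | hc
        · have hxv : xv H1 H2 H3 (m'' + 1) ∈ (WK H1 H2 H3 m'').support :=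
            (WK H1 H2 H3 m'').end_mem_support
          have hnotU := (WK_spec H1 H2 H3 m'').2.1 _ hxv (Ne.symm (xv_ne H1 H2 H3 m''))
          apply hnotU
          rw [← heq]
          exact WK_sub H1 H2 H3 hc _ (getmem m r hr.le)
        · have hmeq : m = m'' := by omega
          subst hmeq
          have heq2 : (WK H1 H2 H3 m).getVert r = (WK H1 H2 H3 m).getVert
              (WK H1 H2 H3 m).length := by
            rw [heq]
            exact (Walk.getVert_length _).symm
          have := getVert_inj (WK_spec H1 H2 H3 m).1 hr.le le_rfl heq2
          omega
      · have hvm' : (WK H1 H2 H3 m').getVert r' ∈ (WK H1 H2 H3 m').support :=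
          getmem m' r' hr'.le
        have hne : (WK H1 H2 H3 m').getVert r' ≠ xv H1 H2 H3 m' := by
          intro h
          have : r' = 0 := getVert_inj (WK_spec H1 H2 H3 m').1 hr'.le (Nat.zero_le _)
            (by rw [h, Walk.getVert_zero])
          omega
        exact (WK_spec H1 H2 H3 m').2.1 _ hvm' hne (heq ▸ hvU)
    have hrlt : ∀ n, n - off H1 H2 H3 (blk H1 H2 H3 n) < (WK H1 H2 H3 (blk H1 H2 H3 n)).length := by
      intro n
      have h1 := blk_le H1 H2 H3 n
      have h2 := blk_lt H1 H2 H3 n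
      rw [off_succ] at h2
      omega
    have key : ∀ n n', n < n' → Sray H1 H2 H3 n ≠ Sray H1 H2 H3 n' := by
      intro n n' hnn heq
      have hb : blk H1 H2 H3 n ≤ blk H1 H2 H3 n' := by
        have hbn : blk H1 H2 H3 n ≤ n' :=
          le_trans (le_trans (off_ge H1 H2 H3 _) (blk_le H1 H2 H3 n)) hnn.le
        exact Nat.le_findGreatest (P := fun m => off H1 H2 H3 m ≤ n') hbn
          (le_trans (blk_le H1 H2 H3 n) hnn.le)
      rcases eq_or_lt_of_le hb with hb' | hb'
      · have h1 := hrlt n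
        have h2 := hrlt n'
        rw [show Sray H1 H2 H3 n = (WK H1 H2 H3 (blk H1 H2 H3 n)).getVert
            (n - off H1 H2 H3 (blk H1 H2 H3 n)) from rfl,
          show Sray H1 H2 H3 n' = (WK H1 H2 H3 (blk H1 H2 H3 n')).getVert
            (n' - off H1 H2 H3 (blk H1 H2 H3 n')) from rfl, ← hb'] at heq
        rw [← hb'] at h2
        have := getVert_inj (WK_spec H1 H2 H3 (blk H1 H2 H3 n)).1 h1.le h2.le heq
        have hle1 := blk_le H1 H2 H3 n
        have hle2 := blk_le H1 H2 H3 n'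
        rw [← hb'] at hle2
        omega
      · exact clash _ _ _ _ hb' (hrlt n) (hrlt n') heq
    intro n n' h
    rcases lt_trichotomy n n' with hl | he | hl
    · exact absurd h (key _ _ hl)
    · exact he
    · exact absurd h.symm (key _ _ hl)
  · -- adjacency
    intro n
    have h1 := blk_le H1 H2 H3 n
    have h2 := blk_lt H1 H2 H3 n
    have hrlt : n - off H1 H2 H3 (blk H1 H2 H3 n) < (WK H1 H2 H3 (blk H1 H2 H3 n)).length := by
      rw [off_succ] at h2; omega
    rcases Nat.lt_or_ge (n + 1) (off H1 H2 H3 (blk H1 H2 H3 n + 1)) with hc | hc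
    · have hbsucc : blk H1 H2 H3 (n + 1) = blk H1 H2 H3 n :=
        blk_eq H1 H2 H3 (by omega) hc
      show G.Adj ((WK H1 H2 H3 (blk H1 H2 H3 n)).getVert (n - off H1 H2 H3 (blk H1 H2 H3 n)))
        ((WK H1 H2 H3 (blk H1 H2 H3 (n+1))).getVert ((n+1) - off H1 H2 H3 (blk H1 H2 H3 (n+1))))
      rw [hbsucc, show n + 1 - off H1 H2 H3 (blk H1 H2 H3 n) =
        (n - off H1 H2 H3 (blk H1 H2 H3 n)) + 1 by omega]
      exact Walk.adj_getVert_succ _ hrlt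
    · have heq1 : n + 1 = off H1 H2 H3 (blk H1 H2 H3 n + 1) := by omega
      have e2 : Sray H1 H2 H3 (n + 1) = xv H1 H2 H3 (blk H1 H2 H3 n + 1) := by
        rw [heq1]; exact Sray_off H1 H2 H3 _
      show G.Adj ((WK H1 H2 H3 (blk H1 H2 H3 n)).getVert (n - off H1 H2 H3 (blk H1 H2 H3 n)))
        (Sray H1 H2 H3 (n + 1))
      have hlen : n - off H1 H2 H3 (blk H1 H2 H3 n) + 1 = (WK H1 H2 H3 (blk H1 H2 H3 n)).length := by
        rw [off_succ] at heq1
        omega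
      have hadj := Walk.adj_getVert_succ (WK H1 H2 H3 (blk H1 H2 H3 n)) hrlt
      rw [hlen, Walk.getVert_length] at hadj
      rw [e2]
      exact hadj
  · -- meets every ray infinitely often
    intro i
    have hinj : Function.Injective (fun m : ℕ => off H1 H2 H3 (m + 1)) := by
      intro a b hab
      have := (off_mono H1 H2 H3).injective hab
      omega
    have himg := (sdl_infinite i).image hinj.injOn
    refine himg.mono ?_
    rintro _ ⟨m, hm, rfl⟩
    show Sray H1 H2 H3 (off H1 H2 H3 (m + 1)) ∈ Set.range (𝓡 i)
    rw [Sray_off]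
    exact ⟨ac H1 H2 H3 (m + 1), by rw [xv, hm]⟩

end TransversalAux

/-- For a countably infinite collection of pairwise disjoint, pairwise equivalent rays
there is a ray `S` meeting every member of the collection infinitely often. -/
theorem exists_transversal_ray {V : Type*} (G : SimpleGraph V) (𝓡 : ℕ → ℕ → V)
    (hray : ∀ i, IsRay G (𝓡 i))
    (hdisj : ∀ i j, i ≠ j → Disjoint (Set.range (𝓡 i)) (Set.range (𝓡 j)))
    (hequiv : ∀ i j, RayEquiv G (𝓡 i) (𝓡 j)) :
    ∃ S : ℕ → V, IsRay G S ∧ ∀ i, {n : ℕ | S n ∈ Set.range (𝓡 i)}.Infinite :=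
  TransversalAux.exists_transversal_ray' G 𝓡 hray hdisj hequiv
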